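/- The multivariate weight enumerator of distinct-multiplicity partitions with parts at most m, i.e., the sum of x_1^{a_1}...x_m^{a_m} over tuples (a_1,...,a_m) of nonnegative integers with a_i ≠ a_j whenever a_i > 0 and a_j > 0 and i ≠ j, equals the sum over set partitions C = {C_1,...,C_r} of {1,...,m} of the product over blocks of mishkal(C_j), where mishkal({s}) = 1/(1-x_s) and mishkal({s_1,...,s_d}) = (-1)^{d-1}(d-1)! (x_{s_1}...x_{s_d})/(1 - x_{s_1}...x_{s_d}) for d > 1. -/

import Mathlib

open scoped Classical

/-- `C` is a set partition of `{1,…,m}` (encoded as `Fin m`). -/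
def IsSetPartition (m : ℕ) (C : Finset (Finset (Fin m))) : Prop :=
  (∀ B ∈ C, B.Nonempty) ∧
  (∀ B₁ ∈ C, ∀ B₂ ∈ C, B₁ ≠ B₂ → Disjoint B₁ B₂) ∧
  (∀ x : Fin m, ∃ B ∈ C, x ∈ B)

/-- The weight `mishkal` of a block `B`: `1/(1-x_s)` for a singleton `{s}`, and
`(-1)^{d-1}(d-1)! (x_{s₁}⋯x_{s_d})/(1-x_{s₁}⋯x_{s_d})` for a block of size `d > 1`. -/
noncomputable def mishkal {m : ℕ} (B : Finset (Fin m)) : MvPowerSeries (Fin m) ℚ :=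
  if B.card = 1 then (1 - ∏ s ∈ B, MvPowerSeries.X s)⁻¹
  else
    ((-1 : ℚ) ^ (B.card - 1) * (Nat.factorial (B.card - 1) : ℚ)) •
      ((∏ s ∈ B, MvPowerSeries.X s) * (1 - ∏ s ∈ B, MvPowerSeries.X s)⁻¹)

open MvPowerSeries

section Aux

variable {m : ℕ}

noncomputable def indB {m : ℕ} (B : Finset (Fin m)) : Fin m →₀ ℕ := ∑ s ∈ B, Finsupp.single s 1

lemma indB_apply (B : Finset (Fin m)) (i : Fin m) : indB B i = if i ∈ B then 1 else 0 := by
  classical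
  simp only [indB, Finsupp.finset_sum_apply, Finsupp.single_apply]
  rw [Finset.sum_ite_eq' B i (fun _ => 1)]

lemma prod_X_eq (B : Finset (Fin m)) :
    (∏ s ∈ B, (MvPowerSeries.X s : MvPowerSeries (Fin m) ℚ)) = monomial (indB B) 1 := by
  classical
  induction B using Finset.induction_on with
  | empty => simp [indB, MvPowerSeries.monomial_zero_one]
  | insert a s hB ih =>
      rw [Finset.prod_insert hB, ih, MvPowerSeries.X, monomial_mul_monomial, one_mul]
      congr 1
      simp [indB, Finset.sum_insert hB]

noncomputable def geom {m : ℕ} (e : Fin m →₀ ℕ) : MvPowerSeries (Fin m) ℚ :=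
  fun d => if ∃ k : ℕ, d = k • e then 1 else 0

lemma coeff_geom (e d : Fin m →₀ ℕ) :
    coeff d (geom e) = if ∃ k : ℕ, d = k • e then 1 else 0 := rfl

lemma indB_ne_zero {B : Finset (Fin m)} (hB : B.Nonempty) : indB B ≠ 0 := by
  obtain ⟨a, ha⟩ := hB
  intro h
  have := DFunLike.congr_fun h a
  simp [indB_apply, ha] at this

lemma geom_mul {e : Fin m →₀ ℕ} (he : e ≠ 0) :
    (1 - monomial e 1) * geom e = 1 := by
  ext d
  rw [sub_mul, one_mul, map_sub, coeff_monomial_mul, coeff_geom, one_mul]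
  by_cases hd : d = 0
  · subst hd
    have h0 : (∃ k : ℕ, (0 : Fin m →₀ ℕ) = k • e) := ⟨0, by simp⟩
    have hne : ¬ e ≤ 0 := fun h => he (le_antisymm h zero_le)
    simp [h0, hne]
  · rw [MvPowerSeries.coeff_one, if_neg hd]
    by_cases h : ∃ k : ℕ, d = k • e
    · obtain ⟨k, rfl⟩ := h
      have hk : k ≠ 0 := by rintro rfl; simp at hd
      have hle : e ≤ k • e := by
        intro i
        simp only [Finsupp.smul_apply, smul_eq_mul]
        exact Nat.le_mul_of_pos_left _ (Nat.pos_of_ne_zero hk)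
      have hsub : k • e - e = (k - 1) • e := by
        ext i
        simp only [Finsupp.tsub_apply, Finsupp.smul_apply, smul_eq_mul]
        rw [Nat.sub_mul, one_mul]
      rw [if_pos ⟨k, rfl⟩, if_pos hle, coeff_geom, hsub, if_pos ⟨k - 1, rfl⟩, sub_self]
    · rw [if_neg h]
      by_cases hle : e ≤ d
      · rw [if_pos hle, coeff_geom, if_neg, sub_self]
        rintro ⟨k, hk⟩
        exact h ⟨k + 1, by rw [add_smul, one_smul, ← hk, tsub_add_cancel_of_le hle]⟩
      · rw [if_neg hle, sub_zero]

lemma geom_eq_inv {e : Fin m →₀ ℕ} (he : e ≠ 0) :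
    (1 - monomial e 1 : MvPowerSeries (Fin m) ℚ)⁻¹ = geom e := by
  rw [MvPowerSeries.inv_eq_iff_mul_eq_one]
  · rw [mul_comm]; exact geom_mul he
  · rw [map_sub, map_one, ← coeff_zero_eq_constantCoeff_apply,
      coeff_monomial_ne (Ne.symm he)]
    norm_num

noncomputable def cB {m : ℕ} (B : Finset (Fin m)) : ℚ :=
  (-1 : ℚ) ^ (B.card - 1) * (Nat.factorial (B.card - 1) : ℚ)

noncomputable def okq {m : ℕ} (B : Finset (Fin m)) (d : Fin m →₀ ℕ) : ℚ :=
  if ∃ k : ℕ, d = k • indB B ∧ (B.card = 1 ∨ 1 ≤ k) then cB B else 0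

lemma coeff_mishkal {B : Finset (Fin m)} (hB : B.Nonempty) (d : Fin m →₀ ℕ) :
    coeff d (mishkal B) = okq B d := by
  have hne := indB_ne_zero hB
  unfold mishkal okq
  rw [prod_X_eq]
  by_cases hc : B.card = 1
  · rw [if_pos hc, geom_eq_inv hne, coeff_geom]
    have hcB : cB B = 1 := by simp [cB, hc]
    by_cases hd : ∃ k : ℕ, d = k • indB B
    · obtain ⟨k, hk⟩ := hd
      rw [if_pos ⟨k, hk⟩, if_pos ⟨k, hk, Or.inl hc⟩, hcB]
    · rw [if_neg hd, if_neg (fun ⟨k, hk, _⟩ => hd ⟨k, hk⟩)]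
  · rw [if_neg hc, geom_eq_inv hne, map_smul, coeff_monomial_mul, smul_eq_mul]
    by_cases h : ∃ k : ℕ, d = k • indB B ∧ (B.card = 1 ∨ 1 ≤ k)
    · obtain ⟨k, rfl, hk⟩ := h
      have hk1 : 1 ≤ k := hk.resolve_left hc
      have hle : indB B ≤ k • indB B := by
        intro i
        simp only [Finsupp.smul_apply, smul_eq_mul]
        exact Nat.le_mul_of_pos_left _ hk1
      have hsub : k • indB B - indB B = (k - 1) • indB B := by
        ext i
        simp only [Finsupp.tsub_apply, Finsupp.smul_apply, smul_eq_mul]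
        rw [Nat.sub_mul, one_mul]
      rw [if_pos hle, hsub, coeff_geom, if_pos ⟨k - 1, rfl⟩, one_mul, mul_one,
        if_pos ⟨k, rfl, hk⟩]
      rfl
    · rw [if_neg h]
      by_cases hle : indB B ≤ d
      · have hng : ¬ ∃ k : ℕ, d - indB B = k • indB B := by
          rintro ⟨k, hk⟩
          exact h ⟨k + 1, by rw [add_smul, one_smul, ← hk, tsub_add_cancel_of_le hle],
            Or.inr (Nat.le_add_left 1 k)⟩
        rw [if_pos hle, coeff_geom, if_neg hng, mul_zero, mul_zero]
      · rw [if_neg hle, mul_zero]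

lemma okq_support {B : Finset (Fin m)} {d : Fin m →₀ ℕ} (h : okq B d ≠ 0) :
    ∀ i, i ∉ B → d i = 0 := by
  rw [okq] at h
  split_ifs at h with hc
  · obtain ⟨k, rfl, -⟩ := hc
    intro i hi
    simp [indB_apply, hi]
  · exact absurd rfl h

lemma coeff_prod_mishkal (C : Finset (Finset (Fin m))) (hne : ∀ B ∈ C, B.Nonempty)
    (hdis : ∀ B₁ ∈ C, ∀ B₂ ∈ C, B₁ ≠ B₂ → Disjoint B₁ B₂) (d : Fin m →₀ ℕ) :
    coeff d (∏ B ∈ C, mishkal B) =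
      if d.support ⊆ C.sup id then ∏ B ∈ C, okq B (d.filter (· ∈ B)) else 0 := by
  classical
  induction C using Finset.induction_on generalizing d with
  | empty =>
      simp only [Finset.prod_empty, MvPowerSeries.coeff_one, Finset.sup_empty]
      by_cases hd : d = 0
      · subst hd; simp
      · rw [if_neg hd, if_neg]
        intro hsub
        exact hd (Finsupp.support_eq_empty.mp (Finset.subset_empty.mp hsub))
  | insert B₀ C hB ih =>
      have hB₀ : B₀.Nonempty := hne B₀ (Finset.mem_insert_self _ _)
      have hneC : ∀ B ∈ C, B.Nonempty := fun B hBC => hne B (Finset.mem_insert_of_mem hBC)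
      have hdisC : ∀ B₁ ∈ C, ∀ B₂ ∈ C, B₁ ≠ B₂ → Disjoint B₁ B₂ := fun B₁ h₁ B₂ h₂ h12 =>
        hdis B₁ (Finset.mem_insert_of_mem h₁) B₂ (Finset.mem_insert_of_mem h₂) h12
      have hdisj : Disjoint B₀ (C.sup id) := by
        rw [Finset.disjoint_sup_right]
        intro B hBC
        exact hdis B₀ (Finset.mem_insert_self _ _) B (Finset.mem_insert_of_mem hBC)
          (fun h => hB (h ▸ hBC))
      set e := d.filter (· ∈ B₀) with he
      set f := d.filter (fun i => ¬ i ∈ B₀) with hf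
      have hef : e + f = d := by
        ext i
        by_cases hi : i ∈ B₀ <;>
          simp [he, hf, Finsupp.filter_apply, hi]
      rw [Finset.prod_insert hB, MvPowerSeries.coeff_mul]
      rw [Finset.sum_eq_single_of_mem (e, f) (Finset.HasAntidiagonal.mem_antidiagonal.mpr hef)]
      · rw [coeff_mishkal hB₀, ih hneC hdisC]
        have hsub_e : ∀ i, i ∉ B₀ → e i = 0 := fun i hi => by
          simp [he, Finsupp.filter_apply, hi]
        have hiff : d.support ⊆ (insert B₀ C).sup id ↔ f.support ⊆ C.sup id := by
          rw [Finset.sup_insert]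
          constructor
          · intro h i hi
            have hi' : i ∈ f.support := hi
            have hfi : f i ≠ 0 := Finsupp.mem_support_iff.mp hi'
            have hiB : ¬ i ∈ B₀ := by
              intro hiB; simp [hf, Finsupp.filter_apply, hiB] at hfi
            have hdi : d i ≠ 0 := by
              intro h0; simp [hf, Finsupp.filter_apply, hiB, h0] at hfi
            rcases Finset.mem_union.mp (h (Finsupp.mem_support_iff.mpr hdi)) with h' | h'
            · exact absurd h' hiB
            · exact h'
          · intro h i hi
            have hdi : d i ≠ 0 := Finsupp.mem_support_iff.mp hi
            by_cases hiB : i ∈ B₀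
            · exact Finset.mem_union_left _ hiB
            · refine Finset.mem_union_right _ (h ?_)
              rw [Finsupp.mem_support_iff]
              simpa [hf, Finsupp.filter_apply, hiB] using hdi
        have hfilt : ∀ B ∈ C, f.filter (· ∈ B) = d.filter (· ∈ B) := by
          intro B hBC
          have hd' : Disjoint B₀ B := hdis B₀ (Finset.mem_insert_self _ _) B
            (Finset.mem_insert_of_mem hBC) (fun h => hB (h ▸ hBC))
          ext i
          by_cases hiB : i ∈ B
          · have : ¬ i ∈ B₀ := fun h' => (Finset.disjoint_left.mp hd') h' hiB
            simp [hf, Finsupp.filter_apply, hiB, this]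
          · simp [hf, Finsupp.filter_apply, hiB]
        by_cases hcond : d.support ⊆ (insert B₀ C).sup id
        · rw [if_pos hcond, if_pos (hiff.mp hcond), Finset.prod_insert hB]
          congr 1
          exact Finset.prod_congr rfl fun B hBC => by rw [hfilt B hBC]
        · rw [if_neg hcond, if_neg (fun h => hcond (hiff.mpr h)), mul_zero]
      · rintro ⟨e', f'⟩ hmem hnepair
        rw [Finset.HasAntidiagonal.mem_antidiagonal] at hmem
        by_contra hzero
        have h1 : coeff e' (mishkal B₀) ≠ 0 := left_ne_zero_of_mul hzero
        have h2 : coeff f' (∏ B ∈ C, mishkal B) ≠ 0 := right_ne_zero_of_mul hzero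
        rw [coeff_mishkal hB₀] at h1
        have hsupp_e : ∀ i, i ∉ B₀ → e' i = 0 := okq_support h1
        rw [ih hneC hdisC] at h2
        have hsupp_f : f'.support ⊆ C.sup id := by
          by_contra hns
          rw [if_neg hns] at h2
          exact h2 rfl
        have hsupp_f' : ∀ i, i ∈ B₀ → f' i = 0 := by
          intro i hi
          by_contra h0
          exact (Finset.disjoint_left.mp hdisj) hi (hsupp_f (Finsupp.mem_support_iff.mpr h0))
        apply hnepair
        have he' : e' = e := by
          ext i
          by_cases hi : i ∈ B₀
          · have := DFunLike.congr_fun hmem i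
            simp only [Finsupp.add_apply] at this
            rw [hsupp_f' i hi, add_zero] at this
            simp [he, Finsupp.filter_apply, hi, this]
          · rw [hsupp_e i hi]
            simp [he, Finsupp.filter_apply, hi]
        have hf' : f' = f := by
          ext i
          by_cases hi : i ∈ B₀
          · rw [hsupp_f' i hi]
            simp [hf, Finsupp.filter_apply, hi]
          · have := DFunLike.congr_fun hmem i
            simp only [Finsupp.add_apply] at this
            rw [hsupp_e i hi, zero_add] at this
            simp [hf, Finsupp.filter_apply, hi, this]
        rw [he', hf']

noncomputable def partsOf (m : ℕ) (S : Finset (Fin m)) : Finset (Finset (Finset (Fin m))) :=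
  Finset.univ.filter fun C =>
    (∀ B ∈ C, B.Nonempty) ∧ (∀ B₁ ∈ C, ∀ B₂ ∈ C, B₁ ≠ B₂ → Disjoint B₁ B₂) ∧ C.sup id = S

lemma mem_partsOf {S : Finset (Fin m)} {C : Finset (Finset (Fin m))} :
    C ∈ partsOf m S ↔
      (∀ B ∈ C, B.Nonempty) ∧ (∀ B₁ ∈ C, ∀ B₂ ∈ C, B₁ ≠ B₂ → Disjoint B₁ B₂) ∧ C.sup id = S := by
  simp [partsOf]

lemma partsOf_empty : partsOf m ∅ = {∅} := by
  ext C
  rw [mem_partsOf, Finset.mem_singleton]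
  constructor
  · rintro ⟨hne, -, hsup⟩
    by_contra hC
    obtain ⟨B, hB⟩ := Finset.nonempty_iff_ne_empty.mpr hC
    obtain ⟨x, hx⟩ := hne B hB
    have : x ∈ C.sup id := Finset.le_sup (f := id) hB hx
    rw [hsup] at this
    exact absurd this (Finset.notMem_empty x)
  · rintro rfl
    exact ⟨by simp, by simp, rfl⟩

noncomputable def blockOf (a : Fin m) (C : Finset (Finset (Fin m))) : Finset (Fin m) :=
  if h : ∃ B ∈ C, a ∈ B then h.choose else ∅

lemma blockOf_spec {a : Fin m} {C : Finset (Finset (Fin m))} (h : ∃ B ∈ C, a ∈ B) :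
    blockOf a C ∈ C ∧ a ∈ blockOf a C := by
  rw [blockOf, dif_pos h]
  exact ⟨h.choose_spec.1, h.choose_spec.2⟩

lemma sup_erase_eq {S : Finset (Fin m)} {C : Finset (Finset (Fin m))}
    (hC : C ∈ partsOf m S) {B₀ : Finset (Fin m)} (hB₀ : B₀ ∈ C) :
    (C.erase B₀).sup id = S \ B₀ := by
  obtain ⟨hne, hdis, hsup⟩ := mem_partsOf.mp hC
  ext x
  rw [Finset.mem_sup, Finset.mem_sdiff]
  constructor
  · rintro ⟨B, hB, hx⟩
    have hBC := Finset.mem_of_mem_erase hB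
    have hBne := Finset.ne_of_mem_erase hB
    refine ⟨hsup ▸ Finset.le_sup (f := id) hBC hx, ?_⟩
    exact fun hxB₀ => Finset.disjoint_left.mp (hdis B hBC B₀ hB₀ hBne) hx hxB₀
  · rintro ⟨hxS, hxB₀⟩
    obtain ⟨B, hB, hx⟩ := Finset.mem_sup.mp (show x ∈ C.sup id from hsup ▸ hxS)
    exact ⟨B, Finset.mem_erase.mpr ⟨fun h => hxB₀ (h ▸ hx), hB⟩, hx⟩

lemma parts_rec (S : Finset (Fin m)) {a : Fin m} (ha : a ∈ S) (f : Finset (Fin m) → ℚ) :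
    ∑ C ∈ partsOf m S, ∏ B ∈ C, f B =
      ∑ B ∈ S.powerset.filter (a ∈ ·), f B * ∑ C ∈ partsOf m (S \ B), ∏ B' ∈ C, f B' := by
  classical
  have hrw : ∀ B ∈ S.powerset.filter (a ∈ ·),
      f B * ∑ C ∈ partsOf m (S \ B), ∏ B' ∈ C, f B'
        = ∑ C ∈ partsOf m (S \ B), f B * ∏ B' ∈ C, f B' := fun B _ => Finset.mul_sum _ _ _
  have hsig := Finset.sum_sigma (Finset.filter (fun x => a ∈ x) S.powerset)
    (fun B => partsOf m (S \ B)) (fun p => f p.1 * ∏ B' ∈ p.2, f B')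
  rw [Finset.sum_congr rfl hrw, ← hsig]
  have hex : ∀ C ∈ partsOf m S, ∃ B ∈ C, a ∈ B := by
    intro C hC
    have h := (mem_partsOf.mp hC).2.2
    have : a ∈ C.sup id := h ▸ ha
    simpa using Finset.mem_sup.mp this
  refine Finset.sum_bij' (fun C hC => ⟨blockOf a C, C.erase (blockOf a C)⟩)
    (fun p _ => insert p.1 p.2) ?_ ?_ ?_ ?_ ?_
  · -- hi : image in sigma set
    intro C hC
    obtain ⟨hB₀C, haB₀⟩ := blockOf_spec (hex C hC)
    obtain ⟨hne, hdis, hsup⟩ := mem_partsOf.mp hC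
    rw [Finset.mem_sigma]
    constructor
    · rw [Finset.mem_filter, Finset.mem_powerset]
      exact ⟨fun x hx => hsup ▸ Finset.le_sup (f := id) hB₀C hx, haB₀⟩
    · rw [mem_partsOf]
      exact ⟨fun B hB => hne B (Finset.mem_of_mem_erase hB),
        fun B₁ h₁ B₂ h₂ h12 => hdis B₁ (Finset.mem_of_mem_erase h₁)
          B₂ (Finset.mem_of_mem_erase h₂) h12,
        sup_erase_eq hC hB₀C⟩
  · -- hj : insert is a partition of S
    rintro ⟨B, C'⟩ hp
    rw [Finset.mem_sigma, Finset.mem_filter, Finset.mem_powerset] at hp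
    obtain ⟨⟨hBS, haB⟩, hC'⟩ := hp
    obtain ⟨hne', hdis', hsup'⟩ := mem_partsOf.mp hC'
    have hblock_sub : ∀ B' ∈ C', B' ⊆ S \ B := fun B' hB' x hx =>
      hsup' ▸ Finset.le_sup (f := id) hB' hx
    have hdisjB : ∀ B' ∈ C', Disjoint B B' := fun B' hB' =>
      Finset.disjoint_left.mpr fun x hxB hxB' =>
        (Finset.mem_sdiff.mp (hblock_sub B' hB' hxB')).2 hxB
    rw [mem_partsOf]
    refine ⟨?_, ?_, ?_⟩
    · intro B' hB'
      rcases Finset.mem_insert.mp hB' with rfl | h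
      · exact ⟨a, haB⟩
      · exact hne' B' h
    · intro B₁ h₁ B₂ h₂ h12
      rcases Finset.mem_insert.mp h₁ with rfl | h₁' <;>
        rcases Finset.mem_insert.mp h₂ with rfl | h₂'
      · exact absurd rfl h12
      · exact hdisjB B₂ h₂'
      · exact (hdisjB B₁ h₁').symm
      · exact hdis' B₁ h₁' B₂ h₂' h12
    · rw [Finset.sup_insert, hsup']
      exact (Finset.union_sdiff_of_subset hBS)
  · -- left_inv
    intro C hC
    exact Finset.insert_erase (blockOf_spec (hex C hC)).1
  · -- right_inv
    rintro ⟨B, C'⟩ hp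
    rw [Finset.mem_sigma, Finset.mem_filter, Finset.mem_powerset] at hp
    obtain ⟨⟨hBS, haB⟩, hC'⟩ := hp
    obtain ⟨hne', hdis', hsup'⟩ := mem_partsOf.mp hC'
    have hnotmem : B ∉ C' := by
      intro hBC'
      have : B ⊆ S \ B := fun x hx => hsup' ▸ Finset.le_sup (f := id) hBC' hx
      exact (Finset.mem_sdiff.mp (this haB)).2 haB
    have hblock : blockOf a (insert B C') = B := by
      obtain ⟨hmem, hamem⟩ := blockOf_spec (⟨B, Finset.mem_insert_self _ _, haB⟩ :
        ∃ B' ∈ insert B C', a ∈ B')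
      rcases Finset.mem_insert.mp hmem with h | h
      · exact h
      · exfalso
        have : blockOf a (insert B C') ⊆ S \ B := fun x hx =>
          hsup' ▸ Finset.le_sup (f := id) h hx
        exact (Finset.mem_sdiff.mp (this hamem)).2 haB
    simp only
    rw [hblock, Finset.erase_insert hnotmem]
  · -- values
    intro C hC
    exact (Finset.mul_prod_erase C f (blockOf_spec (hex C hC)).1).symm

def condOn (d : Fin m →₀ ℕ) (U : Finset (Fin m)) : Prop :=
  ∀ i ∈ U, ∀ j ∈ U, i ≠ j → d i ≠ 0 → d j ≠ 0 → d i ≠ d j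

lemma condOn_anti {d : Fin m →₀ ℕ} {U V : Finset (Fin m)} (h : U ⊆ V) (hV : condOn d V) :
    condOn d U := fun i hi j hj => hV i (h hi) j (h hj)

lemma cond_sdiff (d : Fin m →₀ ℕ) {S T B : Finset (Fin m)} {v : ℕ} (hv : v ≠ 0)
    (hT : T = S.filter (fun j => d j = v)) (hB : B ⊆ T) :
    condOn d (S \ B) ↔ condOn d (S \ T) ∧ (T \ B).card ≤ 1 := by
  subst hT
  constructor
  · intro h
    refine ⟨condOn_anti (Finset.sdiff_subset_sdiff (le_refl S) hB) h, ?_⟩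
    by_contra hcard
    obtain ⟨i, hi, j, hj, hij⟩ := Finset.one_lt_card.mp (show 1 < (Finset.filter (fun j => d j = v) S \ B).card by omega)
    have hi' := Finset.mem_sdiff.mp hi
    have hj' := Finset.mem_sdiff.mp hj
    have hiS := Finset.mem_filter.mp hi'.1
    have hjS := Finset.mem_filter.mp hj'.1
    exact h i (Finset.mem_sdiff.mpr ⟨hiS.1, hi'.2⟩) j (Finset.mem_sdiff.mpr ⟨hjS.1, hj'.2⟩)
      hij (hiS.2 ▸ hv) (hjS.2 ▸ hv) (by rw [hiS.2, hjS.2])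
  · rintro ⟨h0, hcard⟩ i hi j hj hij hdi hdj heq
    obtain ⟨hiS, hiB⟩ := Finset.mem_sdiff.mp hi
    obtain ⟨hjS, hjB⟩ := Finset.mem_sdiff.mp hj
    by_cases hiT : i ∈ Finset.filter (fun j => d j = v) S <;>
      by_cases hjT : j ∈ Finset.filter (fun j => d j = v) S
    · have h2 : 1 < (Finset.filter (fun j => d j = v) S \ B).card :=
        Finset.one_lt_card.mpr ⟨i, Finset.mem_sdiff.mpr ⟨hiT, hiB⟩,
          j, Finset.mem_sdiff.mpr ⟨hjT, hjB⟩, hij⟩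
      omega
    · have h1 : d i = v := (Finset.mem_filter.mp hiT).2
      exact hjT (Finset.mem_filter.mpr ⟨hjS, by rw [← heq, h1]⟩)
    · have h1 : d j = v := (Finset.mem_filter.mp hjT).2
      exact hiT (Finset.mem_filter.mpr ⟨hiS, by rw [heq, h1]⟩)
    · exact h0 i (Finset.mem_sdiff.mpr ⟨hiS, hiT⟩) j (Finset.mem_sdiff.mpr ⟨hjS, hjT⟩)
        hij hdi hdj heq

lemma cond_erase_zero {d : Fin m →₀ ℕ} {S : Finset (Fin m)} {a : Fin m}
    (hda : d a = 0) : condOn d S ↔ condOn d (S \ {a}) := by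
  constructor
  · exact fun h => condOn_anti Finset.sdiff_subset h
  · intro h i hi j hj hij hdi hdj
    have hia : i ≠ a := fun h' => hdi (h' ▸ hda)
    have hja : j ≠ a := fun h' => hdj (h' ▸ hda)
    exact h i (Finset.mem_sdiff.mpr ⟨hi, by simp [hia]⟩)
      j (Finset.mem_sdiff.mpr ⟨hj, by simp [hja]⟩) hij hdi hdj

noncomputable def gq {m : ℕ} (d : Fin m →₀ ℕ) (B : Finset (Fin m)) : ℚ :=
  if ∃ k : ℕ, (∀ i ∈ B, d i = k) ∧ (B.card = 1 ∨ 1 ≤ k) then cB B else 0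

lemma cB_singleton (a : Fin m) : cB ({a} : Finset (Fin m)) = 1 := by simp [cB]

lemma gq_singleton (d : Fin m →₀ ℕ) (a : Fin m) : gq d ({a} : Finset (Fin m)) = 1 := by
  rw [gq, if_pos ⟨d a, fun i hi => by rw [Finset.mem_singleton.mp hi], Or.inl (by simp)⟩,
    cB_singleton]

lemma sum_parts (d : Fin m →₀ ℕ) (S : Finset (Fin m)) :
    ∑ C ∈ partsOf m S, ∏ B ∈ C, gq d B = if condOn d S then 1 else 0 := by
  classical
  induction S using Finset.strongInductionOn with
  | _ S ih =>
  rcases S.eq_empty_or_nonempty with rfl | ⟨a, ha⟩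
  · rw [partsOf_empty, Finset.sum_singleton, Finset.prod_empty, if_pos]
    intro i hi
    exact absurd hi (Finset.notMem_empty i)
  · rw [parts_rec S ha (gq d)]
    by_cases hv : d a = 0
    · -- zero case: only block {a}
      have hmem : ({a} : Finset (Fin m)) ∈ S.powerset.filter (a ∈ ·) := by
        rw [Finset.mem_filter, Finset.mem_powerset]
        exact ⟨Finset.singleton_subset_iff.mpr ha, Finset.mem_singleton_self a⟩
      rw [Finset.sum_eq_single_of_mem _ hmem]
      · rw [gq_singleton, one_mul, ih (S \ {a})
          (Finset.sdiff_ssubset (Finset.singleton_subset_iff.mpr ha) (Finset.singleton_nonempty a))]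
        by_cases hc : condOn d S
        · rw [if_pos hc, if_pos ((cond_erase_zero hv).mp hc)]
        · rw [if_neg hc, if_neg (fun h => hc ((cond_erase_zero hv).mpr h))]
      · intro B hB hBne
        rw [Finset.mem_filter, Finset.mem_powerset] at hB
        obtain ⟨hBS, haB⟩ := hB
        have : gq d B = 0 := by
          rw [gq, if_neg]
          rintro ⟨k, hk, hcard⟩
          have hk0 : k = 0 := by rw [← hk a haB, hv]
          subst hk0
          have hcard1 : B.card = 1 := by
            rcases hcard with h | h
            · exact h
            · omega
          obtain ⟨b, rfl⟩ := Finset.card_eq_one.mp hcard1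
          rw [Finset.mem_singleton] at haB
          exact hBne (by rw [haB])
        rw [this, zero_mul]
    · -- nonzero case
      set v := d a with hva
      set T := S.filter (fun j => d j = v) with hTdef
      have haT : a ∈ T := Finset.mem_filter.mpr ⟨ha, rfl⟩
      have hTS : T ⊆ S := Finset.filter_subset _ _
      -- Step 1: restrict the sum to subsets of T, replacing gq by cB
      have hstep1 : ∑ B ∈ S.powerset.filter (a ∈ ·),
          gq d B * ∑ C ∈ partsOf m (S \ B), ∏ B' ∈ C, gq d B' =
          ∑ B ∈ T.powerset.filter (a ∈ ·),
          cB B * ∑ C ∈ partsOf m (S \ B), ∏ B' ∈ C, gq d B' := by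
        rw [← Finset.sum_subset (Finset.filter_subset_filter _
          (Finset.powerset_mono.mpr hTS))]
        · refine Finset.sum_congr rfl fun B hB => ?_
          rw [Finset.mem_filter, Finset.mem_powerset] at hB
          obtain ⟨hBT, haB⟩ := hB
          have : gq d B = cB B := by
            rw [gq, if_pos]
            exact ⟨v, fun i hi => (Finset.mem_filter.mp (hBT hi)).2,
              Or.inr (Nat.one_le_iff_ne_zero.mpr hv)⟩
          rw [this]
        · intro B hB hBnot
          rw [Finset.mem_filter, Finset.mem_powerset] at hB hBnot
          obtain ⟨hBS, haB⟩ := hB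
          have hgq : gq d B = 0 := by
            rw [gq, if_neg]
            rintro ⟨k, hk, -⟩
            have hkv : k = v := by rw [← hk a haB]
            exact hBnot ⟨fun i hi => Finset.mem_filter.mpr
              ⟨hBS hi, by rw [hk i hi, hkv]⟩, haB⟩
          rw [hgq, zero_mul]
      rw [hstep1]
      -- Step 2: rewrite the inner sums via the induction hypothesis and cond_sdiff
      have hstep2 : ∀ B ∈ T.powerset.filter (a ∈ ·),
          cB B * ∑ C ∈ partsOf m (S \ B), ∏ B' ∈ C, gq d B' =
          (if condOn d (S \ T) then 1 else 0) *
            (cB B * (if (T \ B).card ≤ 1 then 1 else 0)) := by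
        intro B hB
        rw [Finset.mem_filter, Finset.mem_powerset] at hB
        obtain ⟨hBT, haB⟩ := hB
        have hssub : S \ B ⊂ S :=
          Finset.sdiff_ssubset (hBT.trans hTS) ⟨a, haB⟩
        rw [ih (S \ B) hssub]
        by_cases h1 : condOn d (S \ B)
        · obtain ⟨h2, h3⟩ := (cond_sdiff d hv hTdef hBT).mp h1
          rw [if_pos h1, if_pos h2, if_pos h3]
          ring
        · rw [if_neg h1]
          rw [cond_sdiff d hv hTdef hBT] at h1
          push_neg at h1
          by_cases h2 : condOn d (S \ T)
          · rw [if_pos h2, if_neg (show ¬ (T \ B).card ≤ 1 by have := h1 h2; omega)]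
            ring
          · rw [if_neg h2]
            ring
      rw [Finset.sum_congr rfl hstep2, ← Finset.mul_sum]
      -- Step 3: the remaining sum over subsets of T
      have hcondS : condOn d S ↔ condOn d (S \ T) ∧ T.card ≤ 1 := by
        have := cond_sdiff d hv hTdef (Finset.empty_subset T)
        rwa [Finset.sdiff_empty, Finset.sdiff_empty] at this
      by_cases ht1 : T.card = 1
      · -- T = {a}
        obtain ⟨b, hb⟩ := Finset.card_eq_one.mp ht1
        have hba : b = a := by
          rw [hb, Finset.mem_singleton] at haT
          exact haT.symm
        rw [hba] at hb
        have hfilt : T.powerset.filter (a ∈ ·) = {({a} : Finset (Fin m))} := by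
          rw [hb]
          ext B
          simp only [Finset.mem_filter, Finset.mem_powerset, Finset.mem_singleton,
            Finset.subset_singleton_iff]
          constructor
          · rintro ⟨h1 | h1, h2⟩
            · subst h1; exact absurd h2 (Finset.notMem_empty a)
            · exact h1
          · rintro rfl
            exact ⟨Or.inr rfl, Finset.mem_singleton_self a⟩
        rw [hfilt, Finset.sum_singleton, cB_singleton]
        have hTa : T \ ({a} : Finset (Fin m)) = ∅ := by rw [hb]; exact Finset.sdiff_self _
        rw [hTa]
        norm_num
        by_cases hc : condOn d S
        · rw [if_pos hc, if_pos ((hcondS.mp hc).1)]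
        · rw [if_neg hc, if_neg (fun h => hc (hcondS.mpr ⟨h, by omega⟩))]
      · -- T.card ≥ 2 : the alternating sum vanishes
        have ht2 : 2 ≤ T.card := by
          have : 1 ≤ T.card := Finset.card_pos.mpr ⟨a, haT⟩
          omega
        have hcS : ¬ condOn d S := fun h => by
          have := (hcondS.mp h).2
          omega
        rw [if_neg hcS]
        have hzero : ∑ B ∈ T.powerset.filter (a ∈ ·),
            cB B * (if (T \ B).card ≤ 1 then 1 else 0) = 0 := by
          have hiter : ∀ B ∈ T.powerset.filter (a ∈ ·),
              cB B * (if (T \ B).card ≤ 1 then 1 else 0) =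
                if (T \ B).card ≤ 1 then cB B else 0 := by
            intro B _; rw [mul_ite, mul_one, mul_zero]
          rw [Finset.sum_congr rfl hiter, ← Finset.sum_filter]
          have hset : (T.powerset.filter (a ∈ ·)).filter (fun B => (T \ B).card ≤ 1) =
              insert T ((T.erase a).image (fun x => T.erase x)) := by
            ext B
            rw [Finset.mem_filter, Finset.mem_filter, Finset.mem_powerset, Finset.mem_insert,
              Finset.mem_image]
            constructor
            · rintro ⟨⟨hBT, haB⟩, hcard⟩
              have hc : (T \ B).card = T.card - B.card := Finset.card_sdiff_of_subset hBT
              interval_cases h : (T \ B).card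
              · left
                have : T \ B = ∅ := Finset.card_eq_zero.mp h
                exact (Finset.Subset.antisymm (Finset.sdiff_eq_empty_iff_subset.mp this) hBT).symm
              · right
                obtain ⟨x, hx⟩ := Finset.card_eq_one.mp h
                have hxT : x ∈ T := (Finset.mem_sdiff.mp (hx ▸ Finset.mem_singleton_self x)).1
                have hxB : x ∉ B := (Finset.mem_sdiff.mp (hx ▸ Finset.mem_singleton_self x)).2
                refine ⟨x, Finset.mem_erase.mpr ⟨fun h' => hxB (h' ▸ haB), hxT⟩, ?_⟩
                ext i
                rw [Finset.mem_erase]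
                constructor
                · rintro ⟨hix, hiT⟩
                  by_contra hiB
                  have : i ∈ T \ B := Finset.mem_sdiff.mpr ⟨hiT, hiB⟩
                  rw [hx, Finset.mem_singleton] at this
                  exact hix this
                · intro hiB
                  exact ⟨fun h' => hxB (h' ▸ hiB), hBT hiB⟩
            · rintro (rfl | ⟨x, hx, rfl⟩)
              · exact ⟨⟨le_refl _, haT⟩, by rw [Finset.sdiff_self]; simp⟩
              · obtain ⟨hxa, hxT⟩ := Finset.mem_erase.mp hx
                refine ⟨⟨Finset.erase_subset _ _, Finset.mem_erase.mpr ⟨fun h => hxa h.symm, haT⟩⟩,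
                  ?_⟩
                rw [Finset.sdiff_erase_self hxT, Finset.card_singleton]
          rw [hset]
          have hTnot : T ∉ (T.erase a).image (fun x => T.erase x) := by
            intro h
            obtain ⟨x, hx, hex⟩ := Finset.mem_image.mp h
            have hxT : x ∈ T := (Finset.mem_erase.mp hx).2
            have := Finset.card_erase_of_mem hxT
            rw [hex] at this
            omega
          rw [Finset.sum_insert hTnot, Finset.sum_image]
          · have hconst : ∀ x ∈ T.erase a, cB (T.erase x) =
                (-1 : ℚ) ^ (T.card - 2) * ((T.card - 2).factorial : ℚ) := by
              intro x hx
              have hxT : x ∈ T := (Finset.mem_erase.mp hx).2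
              rw [cB, Finset.card_erase_of_mem hxT]
              congr 2 <;> omega
            rw [Finset.sum_congr rfl hconst, Finset.sum_const,
              Finset.card_erase_of_mem haT, cB]
            obtain ⟨u, hu⟩ : ∃ u, T.card = u + 2 := ⟨T.card - 2, by omega⟩
            rw [hu]
            have h1 : u + 2 - 1 = u + 1 := by omega
            have h2 : u + 2 - 2 = u := by omega
            rw [h1, h2, nsmul_eq_mul, Nat.factorial_succ, pow_succ]
            push_cast
            ring
          · intro x hx y hy hxy
            have hxT : x ∈ T := (Finset.mem_erase.mp hx).2
            by_contra hne
            have : x ∈ T.erase y := Finset.mem_erase.mpr ⟨hne, hxT⟩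
            rw [← show T.erase x = T.erase y from hxy] at this
            exact (Finset.mem_erase.mp this).1 rfl
        rw [hzero, mul_zero]

lemma okq_filter (B : Finset (Fin m)) (d : Fin m →₀ ℕ) :
    okq B (d.filter (· ∈ B)) = gq d B := by
  rw [okq, gq]
  congr 1
  rw [eq_iff_iff]
  constructor
  · rintro ⟨k, hk, hc⟩
    refine ⟨k, fun i hi => ?_, hc⟩
    have := DFunLike.congr_fun hk i
    rw [Finsupp.filter_apply, if_pos hi, Finsupp.smul_apply, indB_apply, if_pos hi,
      smul_eq_mul, mul_one] at this
    exact this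
  · rintro ⟨k, hk, hc⟩
    refine ⟨k, ?_, hc⟩
    ext i
    rw [Finsupp.filter_apply, Finsupp.smul_apply, indB_apply, smul_eq_mul]
    by_cases hi : i ∈ B
    · rw [if_pos hi, if_pos hi, mul_one, hk i hi]
    · rw [if_neg hi, if_neg hi, mul_zero]

lemma isSetPartition_iff (C : Finset (Finset (Fin m))) :
    IsSetPartition m C ↔ C ∈ partsOf m Finset.univ := by
  rw [partsOf, Finset.mem_filter]
  constructor
  · rintro ⟨h1, h2, h3⟩
    refine ⟨Finset.mem_univ _, h1, h2, ?_⟩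
    apply Finset.Subset.antisymm (Finset.subset_univ _)
    intro x _
    rw [Finset.mem_sup]
    obtain ⟨B, hB, hx⟩ := h3 x
    exact ⟨B, hB, hx⟩
  · rintro ⟨-, h1, h2, h3⟩
    refine ⟨h1, h2, fun x => ?_⟩
    have : x ∈ C.sup id := h3 ▸ Finset.mem_univ x
    obtain ⟨B, hB, hx⟩ := Finset.mem_sup.mp this
    exact ⟨B, hB, hx⟩


end Aux

/-- The multivariate weight enumerator of distinct-multiplicity partitions with parts at most
`m` (tuples `(a_1,…,a_m) ∈ ℕ^m` whose nonzero entries are pairwise distinct) equals the sum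
over set partitions `C` of `{1,…,m}` of `∏_{B ∈ C} mishkal(B)`: the two series have the same
coefficient at every monomial. -/
theorem weight_enumerator_distinct_mult (m : ℕ) (d : Fin m →₀ ℕ) :
    (if ∀ i j : Fin m, i ≠ j → d i ≠ 0 → d j ≠ 0 → d i ≠ d j then (1 : ℚ) else 0) =
      MvPowerSeries.coeff d
        (∑ C ∈ Finset.univ.filter (fun C : Finset (Finset (Fin m)) => IsSetPartition m C),
          ∏ B ∈ C, mishkal B) := by
  classical
  have hset : Finset.univ.filter (fun C : Finset (Finset (Fin m)) => IsSetPartition m C) =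
      partsOf m Finset.univ := by
    ext C
    rw [Finset.mem_filter, isSetPartition_iff C, and_iff_right (Finset.mem_univ C)]
  rw [hset, map_sum]
  have hterm : ∀ C ∈ partsOf m Finset.univ,
      coeff d (∏ B ∈ C, mishkal B) = ∏ B ∈ C, gq d B := by
    intro C hC
    rw [partsOf, Finset.mem_filter] at hC
    obtain ⟨-, h1, h2, h3⟩ := hC
    rw [coeff_prod_mishkal C h1 h2 d, h3, if_pos (Finset.subset_univ _)]
    exact Finset.prod_congr rfl fun B _ => okq_filter B d
  rw [Finset.sum_congr rfl hterm, sum_parts d Finset.univ]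
  have : condOn d Finset.univ ↔ ∀ i j : Fin m, i ≠ j → d i ≠ 0 → d j ≠ 0 → d i ≠ d j := by
    constructor
    · intro h i j; exact h i (Finset.mem_univ i) j (Finset.mem_univ j)
    · intro h i _ j _; exact h i j
  by_cases hc : condOn d Finset.univ
  · rw [if_pos hc, if_pos (this.mp hc)]
  · rw [if_neg hc, if_neg (fun h => hc (this.mpr h))]
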